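/- Every square matrix over Rmax with at least one entry different from -∞ in each row (or more generally every matrix over Rmax) has at least one max-plus eigenvalue: there exist λ ∈ Rmax and v ∈ Rmax^n, v not identically -∞, with A ⊗ v = λ ⊗ v. -/

import Mathlib

/-- The max-plus semiring carrier: ℝ ∪ {-∞}. -/
abbrev Rmax := WithBot ℝ

/-- Max-plus matrix product: [A ⊗ B]_{ij} = max_k ([A]_{ik} + [B]_{kj}). -/
def mpMul {m n p : ℕ} (A : Matrix (Fin m) (Fin n) Rmax)
    (B : Matrix (Fin n) (Fin p) Rmax) : Matrix (Fin m) (Fin p) Rmax :=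
  fun i j => Finset.univ.sup fun k => A i k + B k j

/-- Max-plus identity matrix. -/
def mpId (n : ℕ) : Matrix (Fin n) (Fin n) Rmax :=
  fun i j => if i = j then (0 : Rmax) else ⊥

/-- Max-plus matrix power. -/
def mpPow {n : ℕ} (A : Matrix (Fin n) (Fin n) Rmax) : ℕ → Matrix (Fin n) (Fin n) Rmax
  | 0 => mpId n
  | p + 1 => mpMul A (mpPow A p)

/-- Max-plus matrix-vector product. -/
def mpMulVec {m n : ℕ} (A : Matrix (Fin m) (Fin n) Rmax) (v : Fin n → Rmax) :
    Fin m → Rmax :=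
  fun i => Finset.univ.sup fun k => A i k + v k

/-- Irreducibility: the precedence graph is strongly connected (a path between
any two distinct vertices; arc (j,i) exists iff [A]_{ij} ≠ -∞, and a path of
length p from j to i exists iff [A^{⊗p}]_{ij} ≠ -∞). -/
def mpIrreducible {n : ℕ} (A : Matrix (Fin n) (Fin n) Rmax) : Prop :=
  ∀ i j : Fin n, i ≠ j → ∃ p : ℕ, 1 ≤ p ∧ mpPow A p i j ≠ ⊥

/-! ### Auxiliary lemmas -/

lemma mp_sup_add_pair (a b c : Rmax) : (a ⊔ b) + c = (a + c) ⊔ (b + c) := by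
  rcases le_total a b with h | h
  · rw [sup_eq_right.2 h, sup_eq_right.2 (add_le_add_left h c)]
  · rw [sup_eq_left.2 h, sup_eq_left.2 (add_le_add_left h c)]

lemma mp_add_sup_pair (a b c : Rmax) : c + (a ⊔ b) = (c + a) ⊔ (c + b) := by
  rcases le_total a b with h | h
  · rw [sup_eq_right.2 h, sup_eq_right.2 (add_le_add_right h c)]
  · rw [sup_eq_left.2 h, sup_eq_left.2 (add_le_add_right h c)]

lemma mp_sup_add {ι : Type*} [DecidableEq ι] (s : Finset ι) (f : ι → Rmax) (c : Rmax) :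
    s.sup f + c = s.sup (fun k => f k + c) := by
  induction s using Finset.induction with
  | empty => simp
  | insert _ _ h ih => rw [Finset.sup_insert, Finset.sup_insert, mp_sup_add_pair, ih]

lemma mp_add_sup {ι : Type*} [DecidableEq ι] (s : Finset ι) (f : ι → Rmax) (c : Rmax) :
    c + s.sup f = s.sup (fun k => c + f k) := by
  induction s using Finset.induction with
  | empty => simp
  | insert _ _ h ih => rw [Finset.sup_insert, Finset.sup_insert, mp_add_sup_pair, ih]

lemma mpMul_assoc {n : ℕ} (A B C : Matrix (Fin n) (Fin n) Rmax) :
    mpMul (mpMul A B) C = mpMul A (mpMul B C) := by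
  funext i j
  show (Finset.univ.sup fun l => (Finset.univ.sup fun k => A i k + B k l) + C l j)
      = Finset.univ.sup fun k => A i k + Finset.univ.sup fun l => B k l + C l j
  calc (Finset.univ.sup fun l => (Finset.univ.sup fun k => A i k + B k l) + C l j)
      = Finset.univ.sup fun l => Finset.univ.sup fun k => A i k + B k l + C l j := by
        refine Finset.sup_congr rfl fun l _ => ?_
        rw [mp_sup_add]
    _ = Finset.univ.sup fun k => Finset.univ.sup fun l => A i k + B k l + C l j :=
        Finset.sup_comm _ _ _
    _ = Finset.univ.sup fun k => A i k + Finset.univ.sup fun l => B k l + C l j := by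
        refine Finset.sup_congr rfl fun k _ => ?_
        rw [mp_add_sup]
        simp only [add_assoc]

lemma mpId_mul {n : ℕ} (A : Matrix (Fin n) (Fin n) Rmax) : mpMul (mpId n) A = A := by
  funext i j
  show (Finset.univ.sup fun k => mpId n i k + A k j) = A i j
  apply le_antisymm
  · refine Finset.sup_le fun k _ => ?_
    by_cases h : i = k
    · subst h; simp [mpId]
    · simp [mpId, h]
  · have := Finset.le_sup (f := fun k => mpId n i k + A k j) (Finset.mem_univ i)
    simpa [mpId] using this

lemma mpPow_add {n : ℕ} (A : Matrix (Fin n) (Fin n) Rmax) (p q : ℕ) :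
    mpPow A (p + q) = mpMul (mpPow A p) (mpPow A q) := by
  induction p with
  | zero => simp [mpPow, mpId_mul]
  | succ p ih =>
      have : p + 1 + q = (p + q) + 1 := by omega
      rw [this]
      show mpMul A (mpPow A (p + q)) = mpMul (mpMul A (mpPow A p)) (mpPow A q)
      rw [ih, mpMul_assoc]

lemma mpMul_entry_le {n : ℕ} (M N : Matrix (Fin n) (Fin n) Rmax) (i k j : Fin n) :
    M i k + N k j ≤ mpMul M N i j :=
  Finset.le_sup (f := fun k => M i k + N k j) (Finset.mem_univ k)

/-- Shifting all entries by a constant shifts powers by `p` times the constant. -/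
lemma mpPow_shift {n : ℕ} (A : Matrix (Fin n) (Fin n) Rmax) (c : ℝ) (p : ℕ) (i j : Fin n) :
    mpPow (fun i j => A i j + (c : Rmax)) p i j = mpPow A p i j + ((p * c : ℝ) : Rmax) := by
  induction p generalizing i j with
  | zero => simp [mpPow]
  | succ p ih =>
      show (Finset.univ.sup fun k => (A i k + (c : Rmax)) + mpPow (fun i j => A i j + (c : Rmax)) p k j)
          = (Finset.univ.sup fun k => A i k + mpPow A p k j) + _
      rw [mp_sup_add]
      refine Finset.sup_congr rfl fun k _ => ?_
      rw [ih]
      have : ((p : ℕ) + 1 : ℕ) * c = c + p * c := by push_cast; ring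
      rw [this, WithBot.coe_add]
      abel

/-- Weight of a walk of length `p` along `w`. -/
def mpWgt {n : ℕ} (A : Matrix (Fin n) (Fin n) Rmax) (p : ℕ) (w : ℕ → Fin n) : Rmax :=
  ∑ t ∈ Finset.range p, A (w t) (w (t + 1))

lemma mpWgt_le_pow {n : ℕ} (A : Matrix (Fin n) (Fin n) Rmax) (p : ℕ) (w : ℕ → Fin n) :
    mpWgt A p w ≤ mpPow A p (w 0) (w p) := by
  induction p generalizing w with
  | zero => simp [mpWgt, mpPow, mpId]
  | succ p ih =>
      have h1 : mpWgt A (p + 1) w = A (w 0) (w 1) + mpWgt A p (fun t => w (t + 1)) := by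
        simp only [mpWgt]
        rw [Finset.sum_range_succ']
        rw [add_comm]
      rw [h1]
      calc A (w 0) (w 1) + mpWgt A p (fun t => w (t + 1))
          ≤ A (w 0) (w 1) + mpPow A p (w 1) (w (p + 1)) := by
            exact add_le_add_right (ih (fun t => w (t + 1))) _
        _ ≤ mpPow A (p + 1) (w 0) (w (p + 1)) :=
            mpMul_entry_le A (mpPow A p) (w 0) (w 1) (w (p + 1))

lemma mpPow_eq_wgt {n : ℕ} (hn : 0 < n) (A : Matrix (Fin n) (Fin n) Rmax) (p : ℕ) (i j : Fin n) :
    mpPow A p i j = ⊥ ∨ ∃ w : ℕ → Fin n, w 0 = i ∧ w p = j ∧ mpWgt A p w = mpPow A p i j := by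
  induction p generalizing i j with
  | zero =>
      by_cases h : i = j
      · subst h
        exact Or.inr ⟨fun _ => i, rfl, rfl, by simp [mpWgt, mpPow, mpId]⟩
      · exact Or.inl (by simp [mpPow, mpId, h])
  | succ p ih =>
      have : Nonempty (Fin n) := Fin.pos_iff_nonempty.1 hn
      have hne : (Finset.univ : Finset (Fin n)).Nonempty := Finset.univ_nonempty
      obtain ⟨k, -, hk⟩ := Finset.exists_mem_eq_sup Finset.univ hne
        (fun k => A i k + mpPow A p k j)
      have hpow : mpPow A (p + 1) i j = A i k + mpPow A p k j := hk
      by_cases hb : mpPow A (p + 1) i j = ⊥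
      · exact Or.inl hb
      · have hb2 : mpPow A p k j ≠ ⊥ := by
          intro h; rw [hpow, h, WithBot.add_bot] at hb; exact hb rfl
        rcases ih k j with h | ⟨w', hw0, hwp, hwgt⟩
        · exact absurd h hb2
        · refine Or.inr ⟨fun t => if t = 0 then i else w' (t - 1), by simp, by simp [hwp], ?_⟩
          have hsh : mpWgt A (p + 1) (fun t => if t = 0 then i else w' (t - 1))
              = A i (w' 0) + mpWgt A p w' := by
            simp only [mpWgt]
            rw [Finset.sum_range_succ', add_comm]
            rfl
          rw [hsh, hw0, hwgt, hpow]

/-- Key lemma: if all diagonal entries of powers up to `n` are `≤ 0`, then any walk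
weight is at most the best power entry of exponent between 1 and `n`. -/
lemma mpWgt_le_sup {n : ℕ} (B : Matrix (Fin n) (Fin n) Rmax)
    (Hdiag : ∀ p ∈ Finset.Icc 1 n, ∀ i, mpPow B p i i ≤ 0) :
    ∀ q, 1 ≤ q → ∀ w : ℕ → Fin n,
      mpWgt B q w ≤ (Finset.Icc 1 n).sup (fun p => mpPow B p (w 0) (w q)) := by
  intro q
  induction q using Nat.strong_induction_on with
  | _ q IH =>
  intro hq w
  by_cases hqn : q ≤ n
  · exact le_trans (mpWgt_le_pow B q w)
      (Finset.le_sup (f := fun p => mpPow B p (w 0) (w q)) (Finset.mem_Icc.2 ⟨hq, hqn⟩))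
  · push_neg at hqn
    have hn : 0 < n := Nat.pos_of_ne_zero (fun h => (h ▸ (w 0) : Fin 0).elim0)
    -- pigeonhole on the first n+1 vertices
    obtain ⟨x, y, hxy, hfxy⟩ := Fintype.exists_ne_map_eq_of_card_lt
      (fun t : Fin (n + 1) => w t) (by simp)
    -- WLOG x < y
    obtain ⟨a, b, hab, hbn, hwab⟩ : ∃ a b : ℕ, a < b ∧ b ≤ n ∧ w a = w b := by
      rcases lt_or_gt_of_ne hxy with h | h
      · exact ⟨x, y, h, Nat.lt_succ_iff.1 y.isLt, hfxy⟩
      · exact ⟨y, x, h, Nat.lt_succ_iff.1 x.isLt, hfxy.symm⟩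
    set d := b - a with hd
    have hd1 : 1 ≤ d := by omega
    have hdn : d ≤ n := by omega
    have hadb : a + d = b := by omega
    have haqd : a ≤ q - d := by omega
    have hbq : b ≤ q := by omega
    have hqd1 : 1 ≤ q - d := by omega
    have hqdq : q - d < q := by omega
    have hqdd : q - d + d = q := by omega
    set w' : ℕ → Fin n := fun t => if t < a then w t else w (t + d) with hw'
    have hw'0 : w' 0 = w 0 := by
      by_cases h : 0 < a
      · simp [hw', h]
      · have ha0 : a = 0 := by omega
        simp only [hw', if_neg (by omega : ¬ (0:ℕ) < a), Nat.zero_add]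
        have hdb : d = b := by omega
        rw [hdb, ← hwab, ha0]
    have hw'q : w' (q - d) = w q := by
      simp only [hw', if_neg (by omega : ¬ q - d < a)]
      rw [hqdd]
    set g : ℕ → Rmax := fun t => B (w t) (w (t + 1)) with hg
    -- the cycle part
    have hcyc : (∑ t ∈ Finset.Ico a b, g t) ≤ 0 := by
      have h1 : (∑ t ∈ Finset.Ico a b, g t) = mpWgt B d (fun t => w (a + t)) := by
        simp only [mpWgt, Finset.range_eq_Ico]
        rw [show Finset.Ico a b = Finset.Ico (0 + a) (d + a) by
          rw [Nat.zero_add]; congr 1; omega]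
        rw [← Finset.sum_Ico_add (fun t => g t) 0 d a]
        rfl
      rw [h1]
      refine le_trans (mpWgt_le_pow B d _) ?_
      show mpPow B d (w (a + 0)) (w (a + d)) ≤ 0
      rw [Nat.add_zero, hadb, ← hwab]
      exact Hdiag d (Finset.mem_Icc.2 ⟨hd1, hdn⟩) (w a)
    -- splitting the walk weight
    have hsplit : mpWgt B q w = (∑ t ∈ Finset.Ico 0 a, g t) + (∑ t ∈ Finset.Ico a b, g t)
        + (∑ t ∈ Finset.Ico b q, g t) := by
      simp only [mpWgt, Finset.range_eq_Ico, hg]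
      rw [Finset.sum_Ico_consecutive g (by omega : 0 ≤ a) (by omega : a ≤ b)]
      rw [Finset.sum_Ico_consecutive g (by omega : 0 ≤ b) hbq]
    have hsplit' : mpWgt B (q - d) w' = (∑ t ∈ Finset.Ico 0 a, g t)
        + (∑ t ∈ Finset.Ico b q, g t) := by
      simp only [mpWgt, Finset.range_eq_Ico]
      rw [← Finset.sum_Ico_consecutive (fun t => B (w' t) (w' (t+1))) (by omega : 0 ≤ a) haqd]
      congr 1
      · refine Finset.sum_congr rfl fun t ht => ?_
        have ht' : t < a := (Finset.mem_Ico.1 ht).2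
        have h1 : w' t = w t := by simp [hw', ht']
        have h2 : w' (t + 1) = w (t + 1) := by
          by_cases h : t + 1 < a
          · simp [hw', h]
          · have hta : t + 1 = a := by omega
            have hh : w' (t + 1) = w (t + 1 + d) := by simp [hw', h]
            rw [hh, hta, hadb]
            exact hwab.symm
        rw [h1, h2]
      · calc ∑ t ∈ Finset.Ico a (q - d), B (w' t) (w' (t + 1))
            = ∑ t ∈ Finset.Ico a (q - d), g (d + t) := by
              refine Finset.sum_congr rfl fun t ht => ?_
              have ht' : a ≤ t := (Finset.mem_Ico.1 ht).1
              have h1 : w' t = w (t + d) := by simp [hw', not_lt.2 ht']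
              have h2 : w' (t + 1) = w (t + 1 + d) := by
                simp only [hw', if_neg (by omega : ¬ t + 1 < a)]
              rw [h1, h2, hg]
              have e1 : t + d = d + t := by omega
              have e2 : t + 1 + d = d + t + 1 := by omega
              rw [e1, e2]
          _ = ∑ t ∈ Finset.Ico (a + d) (q - d + d), g t :=
              Finset.sum_Ico_add (fun t => g t) a (q - d) d
          _ = ∑ t ∈ Finset.Ico b q, g t := by rw [hadb, hqdd]
    have hle : mpWgt B q w ≤ mpWgt B (q - d) w' := by
      rw [hsplit, hsplit']
      calc (∑ t ∈ Finset.Ico 0 a, g t) + (∑ t ∈ Finset.Ico a b, g t)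
            + (∑ t ∈ Finset.Ico b q, g t)
          = ((∑ t ∈ Finset.Ico 0 a, g t) + (∑ t ∈ Finset.Ico b q, g t))
            + (∑ t ∈ Finset.Ico a b, g t) := by abel
        _ ≤ ((∑ t ∈ Finset.Ico 0 a, g t) + (∑ t ∈ Finset.Ico b q, g t)) + 0 :=
            add_le_add_right hcyc _
        _ = (∑ t ∈ Finset.Ico 0 a, g t) + (∑ t ∈ Finset.Ico b q, g t) := add_zero _
    refine le_trans hle ?_
    have := IH (q - d) hqdq hqd1 w'
    rwa [hw'0, hw'q] at this

/-- Consequence: every power entry is dominated by the powers of exponent in `[1, n]`. -/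
lemma mpPow_le_sup {n : ℕ} (hn : 0 < n) (B : Matrix (Fin n) (Fin n) Rmax)
    (Hdiag : ∀ p ∈ Finset.Icc 1 n, ∀ i, mpPow B p i i ≤ 0) (q : ℕ) (hq : 1 ≤ q) (i j : Fin n) :
    mpPow B q i j ≤ (Finset.Icc 1 n).sup (fun p => mpPow B p i j) := by
  rcases mpPow_eq_wgt hn B q i j with h | ⟨w, hw0, hwq, hwgt⟩
  · rw [h]; exact bot_le
  · rw [← hwgt]
    have := mpWgt_le_sup B Hdiag q hq w
    rwa [hw0, hwq] at this

/-- The normalized case: if all diagonals of powers up to n are ≤ 0 and some diagonal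
entry of a power (exponent in [1,n]) is exactly 0, we get a fixed point of `mpMulVec B`. -/
lemma mp_eig_normalized {n : ℕ} (hn : 0 < n) (B : Matrix (Fin n) (Fin n) Rmax)
    (c : Fin n) (p₀ : ℕ) (hp₀ : p₀ ∈ Finset.Icc 1 n)
    (Hdiag : ∀ p ∈ Finset.Icc 1 n, ∀ i, mpPow B p i i ≤ 0)
    (Hcrit : mpPow B p₀ c c = 0) :
    ∃ v : Fin n → Rmax, v c ≠ ⊥ ∧ mpMulVec B v = v := by
  set v : Fin n → Rmax := fun i => (Finset.Icc 1 n).sup (fun p => mpPow B p i c) with hv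
  have hp₀1 : 1 ≤ p₀ := (Finset.mem_Icc.1 hp₀).1
  have hvc : (0 : Rmax) ≤ v c := by
    rw [← Hcrit]
    exact Finset.le_sup (f := fun p => mpPow B p c c) hp₀
  refine ⟨v, ?_, ?_⟩
  · intro h
    rw [h] at hvc
    exact absurd hvc (by simp [le_bot_iff])
  · funext i
    apply le_antisymm
    · -- (B ⊗ v) i ≤ v i
      refine Finset.sup_le fun k _ => ?_
      have : B i k + v k = (Finset.Icc 1 n).sup (fun p => B i k + mpPow B p k c) :=
        mp_add_sup _ _ _
      rw [this]
      refine Finset.sup_le fun p hp => ?_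
      have h1 : B i k + mpPow B p k c ≤ mpPow B (p + 1) i c :=
        mpMul_entry_le B (mpPow B p) i k c
      refine le_trans h1 (le_trans (mpPow_le_sup hn B Hdiag (p + 1) (by omega) i c) ?_)
      exact le_of_eq rfl
    · -- v i ≤ (B ⊗ v) i
      refine Finset.sup_le fun p hp => ?_
      have hp1 : 1 ≤ p := (Finset.mem_Icc.1 hp).1
      have h1 : mpPow B p i c ≤ mpPow B (p + p₀) i c := by
        calc mpPow B p i c = mpPow B p i c + mpPow B p₀ c c := by rw [Hcrit, add_zero]
          _ ≤ mpPow B (p + p₀) i c := by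
              rw [mpPow_add]
              exact mpMul_entry_le (mpPow B p) (mpPow B p₀) i c c
      refine le_trans h1 ?_
      have hdecomp : p + p₀ = (p + p₀ - 1) + 1 := by omega
      have h2 : mpPow B (p + p₀) i c ≤ Finset.univ.sup fun k => B i k + mpPow B (p + p₀ - 1) k c := by
        rw [hdecomp]
        exact le_of_eq rfl
      refine le_trans h2 (Finset.sup_le fun k _ => ?_)
      have h3 : mpPow B (p + p₀ - 1) k c ≤ v k :=
        mpPow_le_sup hn B Hdiag (p + p₀ - 1) (by omega) k c
      exact le_trans (add_le_add_right h3 _) (Finset.le_sup (f := fun k => B i k + v k) (Finset.mem_univ k))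

/-- In the "acyclic" case (all diagonal power entries are ⊥), some column is all ⊥. -/
lemma mp_exists_bot_column {n : ℕ} (hn : 0 < n) (A : Matrix (Fin n) (Fin n) Rmax)
    (Hbot : ∀ p ∈ Finset.Icc 1 n, ∀ i, mpPow A p i i = ⊥) :
    ∃ k : Fin n, ∀ j : Fin n, A j k = ⊥ := by
  by_contra hcol
  push_neg at hcol
  choose f hf using hcol
  have key : ∀ (p : ℕ) (x : Fin n), mpPow A p (f^[p] x) x ≠ ⊥ := by
    intro p
    induction p with
    | zero => intro x; simp [mpPow, mpId]
    | succ p ih =>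
        intro x
        have h1 : A (f (f^[p] x)) (f^[p] x) + mpPow A p (f^[p] x) x
            ≤ mpPow A (p + 1) (f (f^[p] x)) x :=
          mpMul_entry_le A (mpPow A p) _ _ _
        have h2 : A (f (f^[p] x)) (f^[p] x) + mpPow A p (f^[p] x) x ≠ ⊥ := by
          rcases WithBot.ne_bot_iff_exists.1 (hf (f^[p] x)) with ⟨u, hu⟩
          rcases WithBot.ne_bot_iff_exists.1 (ih x) with ⟨w, hw⟩
          rw [← hu, ← hw, ← WithBot.coe_add]
          exact WithBot.coe_ne_bot
        rw [Function.iterate_succ_apply']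
        intro hb
        exact h2 (le_bot_iff.1 (hb ▸ h1))
  have : Nonempty (Fin n) := Fin.pos_iff_nonempty.1 hn
  obtain ⟨x₀⟩ := this
  obtain ⟨x, y, hxy, hfxy⟩ := Fintype.exists_ne_map_eq_of_card_lt
    (fun t : Fin (n + 1) => f^[(t : ℕ)] x₀) (by simp)
  obtain ⟨a, b, hab, hbn, hiter⟩ : ∃ a b : ℕ, a < b ∧ b ≤ n ∧ f^[a] x₀ = f^[b] x₀ := by
    rcases lt_or_gt_of_ne hxy with h | h
    · exact ⟨x, y, h, Nat.lt_succ_iff.1 y.isLt, hfxy⟩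
    · exact ⟨y, x, h, Nat.lt_succ_iff.1 x.isLt, hfxy.symm⟩
  have hfp : f^[b - a] (f^[a] x₀) = f^[a] x₀ := by
    rw [← Function.iterate_add_apply, (by omega : b - a + a = b), ← hiter]
  have := key (b - a) (f^[a] x₀)
  rw [hfp] at this
  exact this (Hbot (b - a) (Finset.mem_Icc.2 ⟨by omega, by omega⟩) _)

/-- Every square max-plus matrix has at least one max-plus eigenvalue. -/
theorem mp_eigenvalue_exists {n : ℕ} (hn : 0 < n)
    (A : Matrix (Fin n) (Fin n) Rmax) :
    ∃ (l : Rmax) (v : Fin n → Rmax), v ≠ (fun _ => (⊥ : Rmax)) ∧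
      mpMulVec A v = fun i => l + v i := by
  classical
  set S : Finset (ℕ × Fin n) :=
    ((Finset.Icc 1 n) ×ˢ (Finset.univ : Finset (Fin n))).filter
      (fun q => mpPow A q.1 q.2 q.2 ≠ ⊥) with hSdef
  by_cases hS : S.Nonempty
  · -- cyclic case: take λ = maximum cycle mean
    set r : ℕ × Fin n → ℝ := fun q => WithBot.unbotD 0 (mpPow A q.1 q.2 q.2) / q.1 with hr
    set lam : ℝ := S.sup' hS r with hlam
    obtain ⟨⟨p₀, c⟩, hmem, hcrit⟩ := Finset.exists_mem_eq_sup' hS r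
    obtain ⟨hmem', hne⟩ := Finset.mem_filter.1 hmem
    have hp₀Icc : p₀ ∈ Finset.Icc 1 n := (Finset.mem_product.1 hmem').1
    have hp₀1 : 1 ≤ p₀ := (Finset.mem_Icc.1 hp₀Icc).1
    obtain ⟨x₀, hx₀⟩ := WithBot.ne_bot_iff_exists.1 hne
    have hx₀lam : x₀ = p₀ * lam := by
      have : lam = x₀ / p₀ := by
        rw [hlam, hcrit, hr]
        simp [← hx₀]
      rw [this]
      field_simp
    set B : Matrix (Fin n) (Fin n) Rmax := fun i j => A i j + ((-lam : ℝ) : Rmax) with hB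
    have Hdiag : ∀ p ∈ Finset.Icc 1 n, ∀ i, mpPow B p i i ≤ 0 := by
      intro p hp i
      rw [hB, mpPow_shift]
      by_cases hbot : mpPow A p i i = ⊥
      · rw [hbot, WithBot.bot_add]; exact bot_le
      · obtain ⟨x, hx⟩ := WithBot.ne_bot_iff_exists.1 hbot
        have hmemS : (p, i) ∈ S := by
          rw [hSdef]
          exact Finset.mem_filter.2 ⟨Finset.mem_product.2 ⟨hp, Finset.mem_univ i⟩, hbot⟩
        have hrle : r (p, i) ≤ lam := Finset.le_sup' r hmemS
        have hp1 : 1 ≤ p := (Finset.mem_Icc.1 hp).1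
        have hple : x / p ≤ lam := by
          have : r (p, i) = x / p := by rw [hr]; simp [← hx]
          rwa [this] at hrle
        have hxle : x ≤ p * lam := by
          rw [div_le_iff₀ (by positivity : (0:ℝ) < p)] at hple
          linarith [hple]
        rw [← hx, ← WithBot.coe_add, ← WithBot.coe_zero, WithBot.coe_le_coe]
        nlinarith [hxle]
    have Hcrit : mpPow B p₀ c c = 0 := by
      rw [hB, mpPow_shift, ← hx₀, ← WithBot.coe_add, ← WithBot.coe_zero]
      congr 1
      rw [hx₀lam]; ring
    obtain ⟨v, hvc, hfix⟩ := mp_eig_normalized hn B c p₀ hp₀Icc Hdiag Hcrit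
    refine ⟨(lam : Rmax), v, ?_, ?_⟩
    · intro h
      exact hvc (congrFun h c)
    · funext i
      have hterm : ∀ k, A i k + v k = (lam : Rmax) + (B i k + v k) := by
        intro k
        have h0 : ((lam : ℝ) : Rmax) + ((-lam : ℝ) : Rmax) = 0 := by
          rw [← WithBot.coe_add]; norm_num
        calc A i k + v k = (((lam : ℝ) : Rmax) + ((-lam : ℝ) : Rmax)) + (A i k + v k) := by
              rw [h0, zero_add]
          _ = (lam : Rmax) + ((A i k + ((-lam : ℝ) : Rmax)) + v k) := by abel
          _ = (lam : Rmax) + (B i k + v k) := rfl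
      calc mpMulVec A v i = Finset.univ.sup fun k => A i k + v k := rfl
        _ = Finset.univ.sup fun k => (lam : Rmax) + (B i k + v k) := by
            exact Finset.sup_congr rfl fun k _ => hterm k
        _ = (lam : Rmax) + Finset.univ.sup fun k => B i k + v k := (mp_add_sup _ _ _).symm
        _ = (lam : Rmax) + mpMulVec B v i := rfl
        _ = (lam : Rmax) + v i := by rw [hfix]
  · -- acyclic case: λ = ⊥
    have Hbot : ∀ p ∈ Finset.Icc 1 n, ∀ i, mpPow A p i i = ⊥ := by
      intro p hp i
      by_contra h
      exact hS ⟨(p, i), Finset.mem_filter.2 ⟨Finset.mem_product.2 ⟨hp, Finset.mem_univ i⟩, h⟩⟩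
    obtain ⟨k, hk⟩ := mp_exists_bot_column hn A Hbot
    refine ⟨⊥, fun j => if j = k then (0 : Rmax) else ⊥, ?_, ?_⟩
    · intro h
      have := congrFun h k
      simp at this
    · funext i
      rw [WithBot.bot_add]
      refine le_bot_iff.1 (Finset.sup_le fun j _ => ?_)
      by_cases hj : j = k
      · subst hj; simp [hk i]
      · simp [hj]
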